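/- Let c ∈ ℝ, φ : ℝ → ℝ continuous, and λ ∈ ℂ with Re(λ) ≠ 0. Let w : ℝ → ℂ be five times continuously differentiable with w, w′, w″, w‴, w⁗ all tending to 0 as |z| → ∞ and with all integrands below integrable, set v := w′, and suppose c·v(z) − v″(z) + v⁗(z) − 2φ(z)·v(z) = λ·w(z) for all z ∈ ℝ. Then ∫ℝ w(z)·conj(v(z)) dz = 0. -/

import Mathlib

open Filter MeasureTheory Complex

lemma aux_integral_deriv_eq_zero {g g' : ℝ → ℂ}
    (hderiv : ∀ x, HasDerivAt g (g' x) x) (hi : Integrable g' (volume : Measure ℝ))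
    (hg : Tendsto g (cocompact ℝ) (nhds 0)) : ∫ x : ℝ, g' x = 0 := by
  rw [cocompact_eq_atBot_atTop] at hg
  simpa using integral_of_hasDerivAt_of_tendsto hderiv hi
    (hg.mono_left le_sup_left) (hg.mono_left le_sup_right)

lemma aux_integrable_mul_conj {f g : ℝ → ℂ} (hf : Continuous f) (hg : Continuous g)
    (h1 : Integrable (fun x => ‖f x‖ ^ 2) (volume : Measure ℝ))
    (h2 : Integrable (fun x => ‖g x‖ ^ 2) (volume : Measure ℝ)) :
    Integrable (fun x : ℝ => f x * starRingEnd ℂ (g x)) (volume : Measure ℝ) := by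
  refine (h1.add h2).mono'
    ((hf.mul (continuous_star.comp hg)).aestronglyMeasurable) ?_
  filter_upwards with x
  rw [norm_mul, RCLike.norm_conj]
  simp only [Pi.add_apply]
  nlinarith [sq_nonneg (‖f x‖ - ‖g x‖), norm_nonneg (f x), norm_nonneg (g x)]

lemma aux_integrable_conj {f : ℝ → ℂ} (hf : Integrable f (volume : Measure ℝ)) :
    Integrable (fun x => starRingEnd ℂ (f x)) (volume : Measure ℝ) := by
  refine hf.norm.mono' (continuous_star.comp_aestronglyMeasurable hf.1) ?_
  filter_upwards with x
  rw [RCLike.norm_conj]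

lemma aux_mul_conj_self (z : ℂ) : z * starRingEnd ℂ z = ((‖z‖ : ℂ)) ^ 2 := by
  rw [Complex.mul_conj, Complex.normSq_eq_norm_sq]
  push_cast
  ring

/-- Orthogonality forced off the imaginary axis: if `v = w′` satisfies `Hv = λ·w`
with `Re(λ) ≠ 0`, where `w` and its derivatives up to fourth order decay at `±∞`
and all the relevant integrands are integrable, then `∫ w·conj(v) = 0`. -/
theorem orthogonality_off_imaginary_axis (c : ℝ) (φ : ℝ → ℝ) (hφ : Continuous φ)
    (lam : ℂ) (hlam : lam.re ≠ 0) (w : ℝ → ℂ) (hw : ContDiff ℝ 5 w)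
    (hdecay : ∀ j : ℕ, j ≤ 4 → Tendsto (iteratedDeriv j w) (cocompact ℝ) (nhds 0))
    (hint : Integrable (fun z => w z * starRingEnd ℂ (deriv w z)) (volume : Measure ℝ))
    (hi0 : Integrable (fun z => ‖deriv w z‖ ^ 2) (volume : Measure ℝ))
    (hi1 : Integrable (fun z => ‖iteratedDeriv 2 w z‖ ^ 2) (volume : Measure ℝ))
    (hi2 : Integrable (fun z => ‖iteratedDeriv 3 w z‖ ^ 2) (volume : Measure ℝ))
    (hi3 : Integrable (fun z => φ z * ‖deriv w z‖ ^ 2) (volume : Measure ℝ))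
    (heq : ∀ z : ℝ,
      (c : ℂ) * deriv w z - iteratedDeriv 2 (deriv w) z + iteratedDeriv 4 (deriv w) z
        - 2 * (φ z : ℂ) * deriv w z = lam * w z) :
    ∫ z : ℝ, w z * starRingEnd ℂ (deriv w z) = 0 := by
  have hv1 : iteratedDeriv 1 w = deriv w := iteratedDeriv_one
  -- rewrite heq in terms of iterated derivatives of w
  have h21 : iteratedDeriv 2 (deriv w) = iteratedDeriv 3 w := (iteratedDeriv_succ' (n := 2)).symm
  have h41 : iteratedDeriv 4 (deriv w) = iteratedDeriv 5 w := (iteratedDeriv_succ' (n := 4)).symm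
  have heq' : ∀ z : ℝ,
      (c : ℂ) * deriv w z - iteratedDeriv 3 w z + iteratedDeriv 5 w z
        - 2 * (φ z : ℂ) * deriv w z = lam * w z := by
    intro z
    have := heq z
    rwa [h21, h41] at this
  -- derivative facts
  have hD : ∀ j : ℕ, j < 5 → ∀ x : ℝ,
      HasDerivAt (iteratedDeriv j w) (iteratedDeriv (j + 1) w x) x := by
    intro j hj x
    rw [iteratedDeriv_succ]
    exact ((hw.differentiable_iteratedDeriv j (by exact_mod_cast hj)) x).hasDerivAt
  have d0 : ∀ x : ℝ, HasDerivAt w (deriv w x) x := fun x => by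
    have := hD 0 (by norm_num) x
    rwa [iteratedDeriv_zero, hv1] at this
  have d1 : ∀ x : ℝ, HasDerivAt (deriv w) (iteratedDeriv 2 w x) x := fun x => by
    have := hD 1 (by norm_num) x
    rwa [hv1] at this
  have d2 : ∀ x : ℝ, HasDerivAt (iteratedDeriv 2 w) (iteratedDeriv 3 w x) x :=
    hD 2 (by norm_num)
  have d3 : ∀ x : ℝ, HasDerivAt (iteratedDeriv 3 w) (iteratedDeriv 4 w x) x :=
    hD 3 (by norm_num)
  have d4 : ∀ x : ℝ, HasDerivAt (iteratedDeriv 4 w) (iteratedDeriv 5 w x) x :=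
    hD 4 (by norm_num)
  -- decay facts
  have t0 : Tendsto w (cocompact ℝ) (nhds 0) := by
    have := hdecay 0 (by norm_num); rwa [iteratedDeriv_zero] at this
  have t1 : Tendsto (deriv w) (cocompact ℝ) (nhds 0) := by
    have := hdecay 1 (by norm_num); rwa [hv1] at this
  have t2 : Tendsto (iteratedDeriv 2 w) (cocompact ℝ) (nhds 0) := hdecay 2 (by norm_num)
  have t3 : Tendsto (iteratedDeriv 3 w) (cocompact ℝ) (nhds 0) := hdecay 3 (by norm_num)
  have t4 : Tendsto (iteratedDeriv 4 w) (cocompact ℝ) (nhds 0) := hdecay 4 (by norm_num)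
  -- continuity facts
  have cw : Continuous w := hw.continuous
  have c0 : Continuous (deriv w) := by
    have := hw.continuous_iteratedDeriv 1 (by exact_mod_cast (by norm_num : (1:ℕ) ≤ 5))
    rwa [hv1] at this
  have c1 : Continuous (iteratedDeriv 2 w) :=
    hw.continuous_iteratedDeriv 2 (by exact_mod_cast (by norm_num : (2:ℕ) ≤ 5))
  have c2 : Continuous (iteratedDeriv 3 w) :=
    hw.continuous_iteratedDeriv 3 (by exact_mod_cast (by norm_num : (3:ℕ) ≤ 5))
  -- mixed integrabilities
  have i00 : Integrable (fun x : ℝ => deriv w x * starRingEnd ℂ (deriv w x))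
      (volume : Measure ℝ) := aux_integrable_mul_conj c0 c0 hi0 hi0
  have i11 : Integrable (fun x : ℝ => iteratedDeriv 2 w x * starRingEnd ℂ (iteratedDeriv 2 w x))
      (volume : Measure ℝ) := aux_integrable_mul_conj c1 c1 hi1 hi1
  have i22 : Integrable (fun x : ℝ => iteratedDeriv 3 w x * starRingEnd ℂ (iteratedDeriv 3 w x))
      (volume : Measure ℝ) := aux_integrable_mul_conj c2 c2 hi2 hi2
  have i20 : Integrable (fun x : ℝ => iteratedDeriv 3 w x * starRingEnd ℂ (deriv w x))
      (volume : Measure ℝ) := aux_integrable_mul_conj c2 c0 hi2 hi0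
  have i21 : Integrable (fun x : ℝ => iteratedDeriv 3 w x * starRingEnd ℂ (iteratedDeriv 2 w x))
      (volume : Measure ℝ) := aux_integrable_mul_conj c2 c1 hi2 hi1
  have iφ : Integrable (fun x : ℝ => ((2 * φ x : ℝ) : ℂ) * (deriv w x * starRingEnd ℂ (deriv w x)))
      (volume : Measure ℝ) := by
    have : Integrable (fun x : ℝ => ((2 * (φ x * ‖deriv w x‖ ^ 2) : ℝ) : ℂ))
        (volume : Measure ℝ) := (hi3.const_mul 2).ofReal
    refine this.congr ?_
    filter_upwards with x
    rw [aux_mul_conj_self]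
    push_cast
    ring
  have i40 : Integrable (fun x : ℝ => iteratedDeriv 5 w x * starRingEnd ℂ (deriv w x))
      (volume : Measure ℝ) := by
    have h : (fun x : ℝ => iteratedDeriv 5 w x * starRingEnd ℂ (deriv w x))
        = fun x : ℝ => lam * (w x * starRingEnd ℂ (deriv w x))
          + ((2 * φ x : ℝ) : ℂ) * (deriv w x * starRingEnd ℂ (deriv w x))
          + iteratedDeriv 3 w x * starRingEnd ℂ (deriv w x)
          - (c : ℂ) * (deriv w x * starRingEnd ℂ (deriv w x)) := by
      funext x
      have h5 : iteratedDeriv 5 w x = lam * w x + 2 * (φ x : ℂ) * deriv w x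
          + iteratedDeriv 3 w x - (c : ℂ) * deriv w x := by
        have := heq' x; linear_combination this
      rw [h5]; push_cast; ring
    rw [h]
    exact (((hint.const_mul lam).add iφ).add i20).sub (i00.const_mul (c : ℂ))
  -- Step A: ∫ (w conj w)' = 0  gives  I + conj I = 0
  set I : ℂ := ∫ z : ℝ, w z * starRingEnd ℂ (deriv w z) with hI
  have stepA : I + starRingEnd ℂ I = 0 := by
    have hA : ∫ x : ℝ, (w x * starRingEnd ℂ (deriv w x)
        + starRingEnd ℂ (w x * starRingEnd ℂ (deriv w x))) = 0 := by
      refine aux_integral_deriv_eq_zero (g := fun x => w x * starRingEnd ℂ (w x)) ?_ ?_ ?_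
      · intro x
        have := (d0 x).mul ((d0 x).star)
        convert this using 1
        all_goals try simp only [starRingEnd_apply, star_mul, star_star]
        all_goals try ring
        all_goals rfl
      · exact hint.add (aux_integrable_conj hint)
      · have := (t0.mul (t0.star))
        simpa using this
    rw [integral_add hint (aux_integrable_conj hint), integral_conj] at hA
    exact hA
  -- Step B1: ∫ g1' = 0 with g1 = w'' conj w'
  have stepB1 : ∫ x : ℝ, (iteratedDeriv 3 w x * starRingEnd ℂ (deriv w x)
      + iteratedDeriv 2 w x * starRingEnd ℂ (iteratedDeriv 2 w x)) = 0 := by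
    refine aux_integral_deriv_eq_zero
      (g := fun x => iteratedDeriv 2 w x * starRingEnd ℂ (deriv w x)) ?_ ?_ ?_
    · intro x
      have := (d2 x).mul ((d1 x).star)
      convert this using 1
      all_goals try simp only [starRingEnd_apply, star_mul, star_star]
      all_goals try ring
      all_goals rfl
    · exact i20.add i11
    · simpa using (t2.mul (t1.star))
  -- Step B2: ∫ g2' = 0 with g2 = w⁗ conj w' - w''' conj w''
  have stepB2 : ∫ x : ℝ, (iteratedDeriv 5 w x * starRingEnd ℂ (deriv w x)
      - iteratedDeriv 3 w x * starRingEnd ℂ (iteratedDeriv 3 w x)) = 0 := by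
    refine aux_integral_deriv_eq_zero
      (g := fun x => iteratedDeriv 4 w x * starRingEnd ℂ (deriv w x)
        - iteratedDeriv 3 w x * starRingEnd ℂ (iteratedDeriv 2 w x)) ?_ ?_ ?_
    · intro x
      have := ((d4 x).mul ((d1 x).star)).sub ((d3 x).mul ((d2 x).star))
      convert this using 1
      all_goals try simp only [starRingEnd_apply, star_mul, star_star]
      all_goals try ring
      all_goals rfl
    · exact i40.sub i22
    · have := ((t4.mul (t1.star)).sub (t3.mul (t2.star)))
      simpa using this
  -- λ I is real
  have hlamI : (lam * I).im = 0 := by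
    have hmain : lam * I = ∫ x : ℝ,
        ((c * ‖deriv w x‖ ^ 2 - 2 * (φ x * ‖deriv w x‖ ^ 2)
          + ‖iteratedDeriv 2 w x‖ ^ 2 + ‖iteratedDeriv 3 w x‖ ^ 2 : ℝ) : ℂ) := by
      have e1 : lam * I = ∫ x : ℝ, lam * (w x * starRingEnd ℂ (deriv w x)) := by
        rw [hI, integral_const_mul]
      rw [e1]
      have hSum : Integrable (fun x : ℝ => iteratedDeriv 3 w x * starRingEnd ℂ (deriv w x)
          + iteratedDeriv 2 w x * starRingEnd ℂ (iteratedDeriv 2 w x))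
          (volume : Measure ℝ) := i20.add i11
      have hLam : Integrable (fun x : ℝ => lam * (w x * starRingEnd ℂ (deriv w x)))
          (volume : Measure ℝ) := hint.const_mul lam
      have hPlus : Integrable (fun x : ℝ => lam * (w x * starRingEnd ℂ (deriv w x))
          + (iteratedDeriv 3 w x * starRingEnd ℂ (deriv w x)
            + iteratedDeriv 2 w x * starRingEnd ℂ (iteratedDeriv 2 w x)))
          (volume : Measure ℝ) := hLam.add hSum
      have hMinus : Integrable (fun x : ℝ => iteratedDeriv 5 w x * starRingEnd ℂ (deriv w x)
          - iteratedDeriv 3 w x * starRingEnd ℂ (iteratedDeriv 3 w x))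
          (volume : Measure ℝ) := i40.sub i22
      have e2 : (∫ x : ℝ, (lam * (w x * starRingEnd ℂ (deriv w x))
            + (iteratedDeriv 3 w x * starRingEnd ℂ (deriv w x)
              + iteratedDeriv 2 w x * starRingEnd ℂ (iteratedDeriv 2 w x))
            - (iteratedDeriv 5 w x * starRingEnd ℂ (deriv w x)
              - iteratedDeriv 3 w x * starRingEnd ℂ (iteratedDeriv 3 w x))))
          = ∫ x : ℝ, lam * (w x * starRingEnd ℂ (deriv w x)) := by
        rw [integral_sub hPlus hMinus, integral_add hLam hSum, stepB1, stepB2]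
        ring
      rw [← e2]
      congr 1
      funext x
      have h5 : lam * w x = (c : ℂ) * deriv w x - iteratedDeriv 3 w x + iteratedDeriv 5 w x
          - 2 * (φ x : ℂ) * deriv w x := (heq' x).symm
      have expand : lam * (w x * starRingEnd ℂ (deriv w x))
          + (iteratedDeriv 3 w x * starRingEnd ℂ (deriv w x)
            + iteratedDeriv 2 w x * starRingEnd ℂ (iteratedDeriv 2 w x))
          - (iteratedDeriv 5 w x * starRingEnd ℂ (deriv w x)
            - iteratedDeriv 3 w x * starRingEnd ℂ (iteratedDeriv 3 w x))
          = (c : ℂ) * (deriv w x * starRingEnd ℂ (deriv w x))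
            - 2 * (φ x : ℂ) * (deriv w x * starRingEnd ℂ (deriv w x))
            + iteratedDeriv 2 w x * starRingEnd ℂ (iteratedDeriv 2 w x)
            + iteratedDeriv 3 w x * starRingEnd ℂ (iteratedDeriv 3 w x) := by
        have : lam * (w x * starRingEnd ℂ (deriv w x))
            = ((c : ℂ) * deriv w x - iteratedDeriv 3 w x + iteratedDeriv 5 w x
              - 2 * (φ x : ℂ) * deriv w x) * starRingEnd ℂ (deriv w x) := by
          rw [← h5]; ring
        rw [this]; ring
      rw [expand, aux_mul_conj_self, aux_mul_conj_self, aux_mul_conj_self]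
      push_cast
      ring
    rw [← Complex.conj_eq_iff_im, hmain, ← integral_conj]
    congr 1
    funext x
    exact Complex.conj_ofReal _
  -- conclude
  have hre : I.re = 0 := by
    have h := congrArg Complex.re stepA
    simp only [Complex.add_re, Complex.conj_re, Complex.zero_re] at h
    linarith
  have him : I.im = 0 := by
    have h := hlamI
    rw [Complex.mul_im, hre, mul_zero, add_zero] at h
    exact (mul_eq_zero.mp h).resolve_left hlam
  exact Complex.ext (by simpa using hre) (by simpa using him)
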